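/- Let a₁, a₂ ∈ ℝ² be linearly independent over ℝ and let Γ = { l₁a₁ + l₂a₂ : l₁, l₂ ∈ ℤ }. Let H : ℝ² → ℝ be smooth and Γ-periodic. For i = 1, 2 let γᵢ : ℝ → ℝ² be a continuously differentiable solution of γᵢ'(t) = ( −∂H/∂y₂(γᵢ(t)), ∂H/∂y₁(γᵢ(t)) ), and suppose there are Tᵢ > 0 and dᵢ = (dᵢ₁, dᵢ₂) ∈ ℤ² with dᵢ ≠ (0,0) such that γᵢ(t+Tᵢ) = γᵢ(t) + dᵢ₁a₁ + dᵢ₂a₂ for all t. Then d₁ and d₂ are proportional: d₁₁·d₂₂ − d₁₂·d₂₁ = 0. -/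

import Mathlib

open Real

noncomputable section

/-- Partial derivative in the first variable of a real function on `ℝ × ℝ`. -/
def rpd1 (f : ℝ × ℝ → ℝ) (x : ℝ × ℝ) : ℝ := deriv (fun t => f (t, x.2)) x.1

/-- Partial derivative in the second variable of a real function on `ℝ × ℝ`. -/
def rpd2 (f : ℝ × ℝ → ℝ) (x : ℝ × ℝ) : ℝ := deriv (fun t => f (x.1, t)) x.2

namespace Stmt13Aux

lemma comp_scalar {γ : ℝ → ℝ×ℝ} {g : ℂ → ℝ} {d : ℝ×ℝ} {L : ℂ →L[ℝ] ℝ} {z : ℂ}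
    (h1 : HasDerivAt γ d (g z)) (h2 : HasFDerivAt g L z) :
    HasFDerivAt (fun z => γ (g z)) (L.smulRight d) z := by
  have h3 := (hasDerivAt_iff_hasFDerivAt.mp h1).comp z h2
  have h4 : (ContinuousLinearMap.toSpanSingleton ℝ d).comp L = L.smulRight d := by
    ext w <;> simp
  rw [h4] at h3
  exact h3



/-- iterate a quasi-period over ℤ -/
lemma quasi_iter {M : Type*} [AddCommGroup M] (f : ℝ → M) (τ : ℝ) (w : M)
    (h : ∀ t, f (t + τ) = f t + w) : ∀ (n : ℤ) (t : ℝ), f (t + n • τ) = f t + n • w := by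
  have hpos : ∀ (n : ℕ) (t : ℝ), f (t + n • τ) = f t + n • w := by
    intro n
    induction n with
    | zero => simp
    | succ k ih =>
      intro t
      have : t + (k + 1 : ℕ) • τ = (t + τ) + k • τ := by
        push_cast [add_nsmul, one_nsmul]; ring
      rw [this, ih (t + τ), h t, succ_nsmul]
      abel
  intro n t
  rcases n with n | n
  · simpa using hpos n t
  · have harg : t + Int.negSucc n • τ + (n + 1 : ℕ) • τ = t := by
      rw [negSucc_zsmul]; abel
    have := hpos (n + 1) (t + Int.negSucc n • τ)
    rw [harg] at this
    rw [this]
    simp only [negSucc_zsmul]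
    abel

/-- global uniqueness for autonomous ODE with Lipschitz RHS -/
lemma ode_unique {V : ℝ × ℝ → ℝ × ℝ} {K : NNReal} (hV : LipschitzWith K V)
    {f g : ℝ → ℝ × ℝ} (hf : ∀ t, HasDerivAt f (V (f t)) t)
    (hg : ∀ t, HasDerivAt g (V (g t)) t) {t₀ : ℝ} (h : f t₀ = g t₀) : f = g := by
  funext t
  set a := min t t₀ - 1 with ha
  set b := max t t₀ + 1 with hb
  have ht0 : t₀ ∈ Set.Ioo a b := by
    constructor
    · have := min_le_right t t₀; simp only [ha]; linarith
    · have := le_max_right t t₀; simp only [hb]; linarith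
  have ht : t ∈ Set.Icc a b := by
    constructor
    · have := min_le_left t t₀; simp only [ha]; linarith
    · have := le_max_left t t₀; simp only [hb]; linarith
  have key := ODE_solution_unique_of_mem_Icc (v := fun _ y => V y) (s := fun _ => Set.univ)
    (fun _ _ => hV.lipschitzOnWith) ht0
    (fun s _ => (hf s).continuousAt.continuousWithinAt)
    (fun s _ => hf s) (fun _ _ => trivial)
    (fun s _ => (hg s).continuousAt.continuousWithinAt)
    (fun s _ => hg s) (fun _ _ => trivial) h
  exact key ht



lemma winding_int {F Fd : ℝ → ℝ → ℂ}
    (hF : Continuous (Function.uncurry F)) (hFd : Continuous (Function.uncurry Fd))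
    (hne : ∀ u θ, F u θ ≠ 0)
    (hper : ∀ u, F u (2 * π) = F u 0)
    (hd : ∀ u θ, HasDerivAt (F u) (Fd u θ) θ) (u : ℝ) :
    ∃ n : ℤ, ∫ θ in (0:ℝ)..(2*π), Fd u θ / F u θ = n * (2 * π * Complex.I) := by
  set q : ℝ → ℂ := fun θ => Fd u θ / F u θ with hq
  have hqc : Continuous q := by
    have h1 : Continuous (F u) := by
      simpa [Function.comp_def] using hF.comp (continuous_const.prodMk continuous_id : Continuous fun θ : ℝ => (u, θ))
    have h2 : Continuous (Fd u) := by
      simpa [Function.comp_def] using hFd.comp (continuous_const.prodMk continuous_id : Continuous fun θ : ℝ => (u, θ))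
    exact h2.div h1 (fun θ => hne u θ)
  set g : ℝ → ℂ := fun θ => ∫ s in (0:ℝ)..θ, q s with hgdef
  have hg : ∀ θ, HasDerivAt g (q θ) θ := by
    intro θ
    exact intervalIntegral.integral_hasDerivAt_right (hqc.intervalIntegrable _ _)
      hqc.stronglyMeasurable.stronglyMeasurableAtFilter hqc.continuousAt
  set φ : ℝ → ℂ := fun θ => F u θ * Complex.exp (-g θ) with hφdef
  have hφd : ∀ θ, HasDerivAt φ 0 θ := by
    intro θ
    have h1 : HasDerivAt (fun θ => Complex.exp (-g θ)) (-q θ * Complex.exp (-(g θ))) θ := by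
      simpa [mul_comm] using ((hg θ).neg).cexp
    have h2 := (hd u θ).mul h1
    have hFne := hne u θ
    have e : F u θ * q θ = Fd u θ := by simp only [hq]; field_simp
    have h3 : Fd u θ * Complex.exp (-g θ) + F u θ * (-q θ * Complex.exp (-g θ)) = 0 := by
      rw [← e]; ring
    rw [h3] at h2
    exact h2
  have hconst : φ (2 * π) = φ 0 := by
    have hdiff : Differentiable ℝ φ := fun θ => (hφd θ).differentiableAt
    exact is_const_of_deriv_eq_zero hdiff (fun θ => (hφd θ).deriv) _ _
  have hg0 : g 0 = 0 := by simp [hgdef]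
  have hexp1 : Complex.exp (-g (2 * π)) = 1 := by
    have h3 : F u 0 * Complex.exp (-g (2 * π)) = F u 0 * 1 := by
      rw [mul_one]
      have := hconst
      rw [hφdef] at this
      simpa only [hper u, hg0, neg_zero, Complex.exp_zero, mul_one] using this
    exact mul_left_cancel₀ (hne u 0) h3
  obtain ⟨n, hn⟩ := Complex.exp_eq_one_iff.mp hexp1
  refine ⟨-n, ?_⟩
  have hfin : g (2 * π) = (-n : ℤ) * (2 * π * Complex.I) := by
    have h4 : -g (2 * π) = n * (2 * π * Complex.I) := hn
    push_cast
    linear_combination -h4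
  simpa [hgdef] using hfin

lemma winding_rigid {F Fd : ℝ → ℝ → ℂ}
    (hF : Continuous (Function.uncurry F)) (hFd : Continuous (Function.uncurry Fd))
    (hne : ∀ u θ, F u θ ≠ 0)
    (hper : ∀ u, F u (2 * π) = F u 0)
    (hd : ∀ u θ, HasDerivAt (F u) (Fd u θ) θ) :
    ∫ θ in (0:ℝ)..(2*π), Fd 0 θ / F 0 θ = ∫ θ in (0:ℝ)..(2*π), Fd 1 θ / F 1 θ := by
  set w : ℝ → ℂ := fun u => ∫ θ in (0:ℝ)..(2*π), Fd u θ / F u θ with hw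
  have hqc : Continuous (Function.uncurry (fun u θ => Fd u θ / F u θ)) :=
    hFd.div hF (fun p => hne p.1 p.2)
  have hwc : Continuous w :=
    intervalIntegral.continuous_parametric_intervalIntegral_of_continuous' hqc 0 (2*π)
  have hint : ∀ u, ∃ n : ℤ, w u = n * (2 * π * Complex.I) :=
    fun u => winding_int hF hFd hne hper hd u
  obtain ⟨n₀, h₀⟩ := hint 0
  obtain ⟨n₁, h₁⟩ := hint 1
  have him : ∀ (n : ℤ), ((n : ℂ) * (2 * π * Complex.I)).im = 2 * π * n := by
    intro n; simp [Complex.mul_im]; ring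
  have hiw : Continuous fun u => (w u).im := Complex.continuous_im.comp hwc
  by_contra hcon
  have hcon' : n₀ ≠ n₁ := by
    intro h
    exact hcon (by rw [show (∫ θ in (0:ℝ)..(2*π), Fd 0 θ / F 0 θ) = w 0 from rfl,
      show (∫ θ in (0:ℝ)..(2*π), Fd 1 θ / F 1 θ) = w 1 from rfl, h₀, h₁, h])
  have hπ : 0 < π := pi_pos
  have key : ∀ (m₀ m₁ : ℤ), m₀ < m₁ →
      ((w 0).im = 2*π*m₀ ∧ (w 1).im = 2*π*m₁) ∨ ((w 1).im = 2*π*m₀ ∧ (w 0).im = 2*π*m₁) →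
      False := by
    intro m₀ m₁ hlt hab
    have hm : (m₀ : ℝ) + 1 ≤ m₁ := by exact_mod_cast hlt
    have hmid : (2*π*m₀ + π) ∈ Set.uIcc ((w 0).im) ((w 1).im) := by
      rcases hab with ⟨ha, hb⟩ | ⟨ha, hb⟩
      · rw [Set.mem_uIcc]; left; rw [ha, hb]; constructor <;> nlinarith
      · rw [Set.mem_uIcc]; right; rw [ha, hb]; constructor <;> nlinarith
    obtain ⟨u, _, hu⟩ := intermediate_value_uIcc (f := fun u => (w u).im) (a := (0:ℝ)) (b := 1)
      hiw.continuousOn hmid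
    obtain ⟨nu, hnu⟩ := hint u
    have hu' : (w u).im = 2*π*m₀ + π := hu
    have h2 : 2*π*(nu:ℝ) = 2*π*m₀ + π := by rw [← him nu, ← hnu]; exact hu'
    have h3 := mul_left_cancel₀ pi_ne_zero
      (show π * (2*(nu:ℝ)) = π * (2*m₀+1) by linarith)
    have h4 : (2*nu : ℤ) = 2*m₀+1 := by exact_mod_cast h3
    omega
  rcases lt_trichotomy n₀ n₁ with h | h | h
  · exact key n₀ n₁ h (Or.inl ⟨by rw [h₀, him], by rw [h₁, him]⟩)
  · exact hcon' h
  · exact key n₁ n₀ h (Or.inr ⟨by rw [h₁, him], by rw [h₀, him]⟩)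





lemma exists_zero {Φ : ℂ → ℂ} {Φd : ℂ → ℂ →L[ℝ] ℂ}
    (hΦd : ∀ z, HasFDerivAt Φ (Φd z) z)
    (hΦdc : Continuous fun p : ℂ × ℂ => Φd p.1 p.2)
    {C : ℝ} (hC : ∀ z, ‖Φ z - z‖ ≤ C) : ∃ z, Φ z = 0 := by
  by_contra hno
  push_neg at hno
  have hΦc : Continuous Φ := by
    rw [continuous_iff_continuousAt]; exact fun z => (hΦd z).continuousAt
  have hC0 : 0 ≤ C := le_trans (norm_nonneg _) (hC 0)
  set R : ℝ := C + 1 with hR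
  have hRpos : 0 < R := by linarith
  set c : ℝ → ℂ := fun θ => (R:ℂ) * Complex.exp (θ * Complex.I) with hcdef
  set c' : ℝ → ℂ := fun θ => (R:ℂ) * Complex.exp (θ * Complex.I) * Complex.I with hc'def
  have hcd : ∀ θ, HasDerivAt c (c' θ) θ := by
    intro θ
    have h1 : HasDerivAt (fun θ : ℝ => (θ:ℂ) * Complex.I) Complex.I θ := by
      simpa using (Complex.ofRealCLM.hasDerivAt (x := θ)).mul_const Complex.I
    have h2 := h1.cexp
    simpa [hcdef, hc'def, mul_assoc] using h2.const_mul (R:ℂ)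
  have hcnorm : ∀ θ, ‖c θ‖ = R := by
    intro θ
    simp [hcdef, norm_mul, map_mul, Complex.norm_exp, abs_of_pos hRpos]
  have hcper : c (2*π) = c 0 := by
    have : ((2*π : ℝ) : ℂ) * Complex.I = 2*π*Complex.I := by push_cast; ring
    simp [hcdef, this, Complex.exp_two_pi_mul_I]
  have hccont : Continuous c := by
    simp only [hcdef]; fun_prop
  have hc'cont : Continuous c' := by
    simp only [hc'def]; fun_prop
  set ρ : ℝ → ℝ := fun u => max 0 (min 1 u) with hρdef
  have hρc : Continuous ρ := by simp only [hρdef]; fun_prop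
  have hρ0 : ∀ u, 0 ≤ ρ u := fun u => le_max_left _ _
  have hρ1 : ∀ u, ρ u ≤ 1 := fun u => max_le zero_le_one (min_le_left _ _)
  have hρat0 : ρ 0 = 0 := by simp [hρdef]
  have hρat1 : ρ 1 = 1 := by simp [hρdef]
  -- family A : interpolation between the circle and its image under Φ
  set FA : ℝ → ℝ → ℂ := fun u θ => c θ + (ρ u : ℂ) * (Φ (c θ) - c θ) with hFA
  set FdA : ℝ → ℝ → ℂ := fun u θ => c' θ + (ρ u : ℂ) * (Φd (c θ) (c' θ) - c' θ) with hFdA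
  -- family B : contraction of the circle to the origin
  set FB : ℝ → ℝ → ℂ := fun u θ => Φ ((u:ℂ) * c θ) with hFB
  set FdB : ℝ → ℝ → ℂ := fun u θ => Φd ((u:ℂ) * c θ) ((u:ℂ) * c' θ) with hFdB
  have hAF : Continuous (Function.uncurry FA) := by
    apply ((hccont.comp continuous_snd).add _)
    exact (Complex.continuous_ofReal.comp (hρc.comp continuous_fst)).mul
      ((hΦc.comp (hccont.comp continuous_snd)).sub (hccont.comp continuous_snd))
  have hAFd : Continuous (Function.uncurry FdA) := by
    apply ((hc'cont.comp continuous_snd).add _)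
    refine (Complex.continuous_ofReal.comp (hρc.comp continuous_fst)).mul (Continuous.sub ?_ (hc'cont.comp continuous_snd))
    exact hΦdc.comp (((hccont.comp continuous_snd)).prodMk ((hc'cont.comp continuous_snd)))
  have hAne : ∀ u θ, FA u θ ≠ 0 := by
    intro u θ heq
    have h1 : ‖(ρ u : ℂ) * (Φ (c θ) - c θ)‖ ≤ C := by
      rw [norm_mul, Complex.norm_real]
      have := hC (c θ)
      have h2 : ‖ρ u‖ ≤ 1 := by rw [Real.norm_eq_abs, abs_of_nonneg (hρ0 u)]; exact hρ1 u
      calc ‖ρ u‖ * ‖Φ (c θ) - c θ‖ ≤ 1 * C := by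
            exact mul_le_mul h2 this (norm_nonneg _) zero_le_one
        _ = C := one_mul C
    have h3 : c θ = -((ρ u : ℂ) * (Φ (c θ) - c θ)) := by linear_combination heq
    have h4 : ‖c θ‖ ≤ C := by rw [h3, norm_neg]; exact h1
    rw [hcnorm θ] at h4
    linarith
  have hAper : ∀ u, FA u (2*π) = FA u 0 := by
    intro u; simp only [hFA, hcper]
  have hAd : ∀ u θ, HasDerivAt (FA u) (FdA u θ) θ := by
    intro u θ
    have hcomp : HasDerivAt (fun θ => Φ (c θ)) (Φd (c θ) (c' θ)) θ :=
      (hΦd (c θ)).comp_hasDerivAt θ (hcd θ)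
    exact (hcd θ).add (((hcomp.sub (hcd θ))).const_mul ((ρ u : ℂ)))
  have hBF : Continuous (Function.uncurry FB) := by
    apply hΦc.comp
    exact (Complex.continuous_ofReal.comp continuous_fst).mul (hccont.comp continuous_snd)
  have hBFd : Continuous (Function.uncurry FdB) := by
    have h := hΦdc.comp ((((Complex.continuous_ofReal.comp continuous_fst).mul
      (hccont.comp continuous_snd)).prodMk
      ((Complex.continuous_ofReal.comp continuous_fst).mul (hc'cont.comp continuous_snd))) :
      Continuous fun p : ℝ × ℝ => (((p.1:ℂ) * c p.2, (p.1:ℂ) * c' p.2) : ℂ × ℂ))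
    exact h
  have hBne : ∀ u θ, FB u θ ≠ 0 := fun u θ => hno _
  have hBper : ∀ u, FB u (2*π) = FB u 0 := by intro u; simp only [hFB, hcper]
  have hBd : ∀ u θ, HasDerivAt (FB u) (FdB u θ) θ := by
    intro u θ
    exact (hΦd _).comp_hasDerivAt θ ((hcd θ).const_mul ((u:ℂ)))
  have hwA := winding_rigid hAF hAFd hAne hAper hAd
  have hwB := winding_rigid hBF hBFd hBne hBper hBd
  -- compute the endpoints
  have hA0 : ∫ θ in (0:ℝ)..(2*π), FdA 0 θ / FA 0 θ = 2*π*Complex.I := by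
    have hcongr : ∀ θ, FdA 0 θ / FA 0 θ = Complex.I := by
      intro θ
      have hexpne : Complex.exp ((θ:ℂ) * Complex.I) ≠ 0 := Complex.exp_ne_zero _
      have hRne : (R:ℂ) ≠ 0 := by exact_mod_cast ne_of_gt hRpos
      simp only [hFdA, hFA, hρat0, Complex.ofReal_zero, zero_mul, add_zero, hcdef, hc'def]
      field_simp
    rw [intervalIntegral.integral_congr (fun θ _ => hcongr θ)]
    simp [Complex.real_smul]
  have hB0 : ∫ θ in (0:ℝ)..(2*π), FdB 0 θ / FB 0 θ = 0 := by
    have hcongr : ∀ θ, FdB 0 θ / FB 0 θ = 0 := by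
      intro θ
      simp only [hFdB, Complex.ofReal_zero, zero_mul]
      rw [(Φd 0).map_zero, zero_div]
    rw [intervalIntegral.integral_congr (fun θ _ => hcongr θ)]
    simp
  have h11 : ∀ θ, FA 1 θ = FB 1 θ ∧ FdA 1 θ = FdB 1 θ := by
    intro θ
    constructor
    · simp only [hFA, hFB, hρat1, Complex.ofReal_one, one_mul]; ring
    · simp only [hFdA, hFdB, hρat1, Complex.ofReal_one, one_mul]; ring
  have htie : ∫ θ in (0:ℝ)..(2*π), FdA 1 θ / FA 1 θ = ∫ θ in (0:ℝ)..(2*π), FdB 1 θ / FB 1 θ := by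
    apply intervalIntegral.integral_congr
    intro θ _
    show FdA 1 θ / FA 1 θ = FdB 1 θ / FB 1 θ
    rw [(h11 θ).1, (h11 θ).2]
  have : (2*π*Complex.I : ℂ) = 0 := by
    rw [← hA0, hwA, htie, ← hwB, hB0]
  simp [Real.pi_ne_zero, Complex.I_ne_zero] at this


lemma rpd1_eq {H : ℝ × ℝ → ℝ} (hH : ContDiff ℝ (⊤:ℕ∞) H) (x : ℝ × ℝ) :
    rpd1 H x = fderiv ℝ H x (1, 0) := by
  have h1 : HasDerivAt (fun t : ℝ => ((t, x.2) : ℝ × ℝ)) (1, 0) x.1 :=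
    (hasDerivAt_id x.1).prodMk (hasDerivAt_const _ _)
  have h2 := ((hH.differentiable (by simp) (x.1, x.2)).hasFDerivAt).comp_hasDerivAt x.1 h1
  have h3 := h2.deriv
  simpa [rpd1, Function.comp_def] using h3

lemma rpd2_eq {H : ℝ × ℝ → ℝ} (hH : ContDiff ℝ (⊤:ℕ∞) H) (x : ℝ × ℝ) :
    rpd2 H x = fderiv ℝ H x (0, 1) := by
  have h1 : HasDerivAt (fun t : ℝ => ((x.1, t) : ℝ × ℝ)) (0, 1) x.2 :=
    (hasDerivAt_const _ _).prodMk (hasDerivAt_id x.2)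
  have h2 := ((hH.differentiable (by simp) (x.1, x.2)).hasFDerivAt).comp_hasDerivAt x.2 h1
  have h3 := h2.deriv
  simpa [rpd2, Function.comp_def] using h3

lemma V_contDiff {H : ℝ × ℝ → ℝ} (hH : ContDiff ℝ (⊤:ℕ∞) H) :
    ContDiff ℝ (⊤:ℕ∞) (fun y => ((-rpd2 H y, rpd1 H y) : ℝ × ℝ)) := by
  have hfd : ContDiff ℝ (⊤:ℕ∞) (fun y => fderiv ℝ H y) := hH.fderiv_right (by simp)
  set NCLM : ((ℝ×ℝ) →L[ℝ] ℝ) →L[ℝ] (ℝ×ℝ) :=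
    (-(ContinuousLinearMap.apply ℝ ℝ ((0,1) : ℝ×ℝ))).prod
      (ContinuousLinearMap.apply ℝ ℝ ((1,0) : ℝ×ℝ)) with hN
  have heq : (fun y => ((-rpd2 H y, rpd1 H y) : ℝ × ℝ)) = fun y => NCLM (fderiv ℝ H y) := by
    funext y
    rw [rpd1_eq hH y, rpd2_eq hH y, hN]
    simp [ContinuousLinearMap.prod_apply]
  rw [heq]
  exact NCLM.contDiff.comp hfd

lemma fderiv_translate {F : Type*} [NormedAddCommGroup F] [NormedSpace ℝ F]
    {f : (ℝ×ℝ) → F} (hf : Differentiable ℝ f) (g : ℝ×ℝ)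
    (hper : ∀ y, f (y + g) = f y) (y : ℝ×ℝ) : fderiv ℝ f (y + g) = fderiv ℝ f y := by
  have h1 : HasFDerivAt (fun y => f (y + g))
      ((fderiv ℝ f (y+g)).comp (ContinuousLinearMap.id ℝ (ℝ×ℝ))) y :=
    (hf (y+g)).hasFDerivAt.comp y ((hasFDerivAt_id y).add_const g)
  rw [ContinuousLinearMap.comp_id] at h1
  have h2 : (fun y => f (y + g)) = f := funext hper
  rw [h2] at h1
  exact (h1.fderiv).symm

lemma lipschitz_of_periodic {V : ℝ×ℝ → ℝ×ℝ} (hV : ContDiff ℝ (⊤:ℕ∞) V)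
    {a₁ a₂ : ℝ×ℝ} (hindep : LinearIndependent ℝ ![a₁, a₂])
    (hper : ∀ (y : ℝ×ℝ) (l₁ l₂ : ℤ), V (y + l₁ • a₁ + l₂ • a₂) = V y) :
    ∃ K : NNReal, LipschitzWith K V := by
  have hVd : Differentiable ℝ V := hV.differentiable (by simp)
  have hfp : ∀ (y : ℝ×ℝ) (l₁ l₂ : ℤ), fderiv ℝ V (y + (l₁ • a₁ + l₂ • a₂)) = fderiv ℝ V y := by
    intro y l₁ l₂
    exact fderiv_translate hVd _ (fun z => by rw [← add_assoc]; exact hper z l₁ l₂) y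
  have hcard : Fintype.card (Fin 2) = Module.finrank ℝ (ℝ×ℝ) := by simp
  set b := basisOfLinearIndependentOfCardEqFinrank hindep hcard with hb
  have hb0 : b 0 = a₁ := by
    rw [hb, coe_basisOfLinearIndependentOfCardEqFinrank]; rfl
  have hb1 : b 1 = a₂ := by
    rw [hb, coe_basisOfLinearIndependentOfCardEqFinrank]; rfl
  set K₀ : Set (ℝ×ℝ) := (fun p : ℝ×ℝ => p.1 • a₁ + p.2 • a₂) '' (Set.Icc 0 1 ×ˢ Set.Icc 0 1)
    with hK₀
  have hK₀c : IsCompact K₀ := (isCompact_Icc.prod isCompact_Icc).image (by fun_prop)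
  obtain ⟨Cb, hCb⟩ := hK₀c.exists_bound_of_continuousOn
    ((hV.continuous_fderiv (by simp)).continuousOn)
  refine ⟨⟨max Cb 0, le_max_right _ _⟩, ?_⟩
  apply lipschitzWith_of_nnnorm_fderiv_le hVd
  intro y
  have hrepr : y = (b.repr y 0) • a₁ + (b.repr y 1) • a₂ := by
    have h := b.sum_repr y
    rw [Fin.sum_univ_two, hb0, hb1] at h
    exact h.symm
  set c₀ := b.repr y 0 with hc₀
  set c₁ := b.repr y 1 with hc₁
  have hyz : y = (Int.fract c₀ • a₁ + Int.fract c₁ • a₂) + (⌊c₀⌋ • a₁ + ⌊c₁⌋ • a₂) := by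
    rw [← Int.cast_smul_eq_zsmul ℝ ⌊c₀⌋ a₁, ← Int.cast_smul_eq_zsmul ℝ ⌊c₁⌋ a₂]
    rw [Int.fract, Int.fract, sub_smul, sub_smul]
    rw [hrepr]; abel
  have hmem : (Int.fract c₀ • a₁ + Int.fract c₁ • a₂) ∈ K₀ := by
    refine ⟨(Int.fract c₀, Int.fract c₁), ?_, rfl⟩
    constructor
    · exact ⟨Int.fract_nonneg _, (Int.fract_lt_one _).le⟩
    · exact ⟨Int.fract_nonneg _, (Int.fract_lt_one _).le⟩
  have hbnd : ‖fderiv ℝ V y‖ ≤ Cb := by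
    conv_lhs => rw [hyz]
    rw [hfp _ ⌊c₀⌋ ⌊c₁⌋]
    exact hCb _ hmem
  have : ‖fderiv ℝ V y‖ ≤ max Cb 0 := le_trans hbnd (le_max_left _ _)
  exact_mod_cast this


end Stmt13Aux

open intervalIntegral


theorem stmt_13 (a₁ a₂ : ℝ × ℝ) (hindep : LinearIndependent ℝ ![a₁, a₂])
    (H : ℝ × ℝ → ℝ) (hH : ContDiff ℝ (⊤ : ℕ∞) H)
    (hper : ∀ (y : ℝ × ℝ) (l₁ l₂ : ℤ), H (y + l₁ • a₁ + l₂ • a₂) = H y)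
    (γ₁ γ₂ : ℝ → ℝ × ℝ)
    (hγ₁ : ∀ t, HasDerivAt γ₁ (-rpd2 H (γ₁ t), rpd1 H (γ₁ t)) t)
    (hγ₂ : ∀ t, HasDerivAt γ₂ (-rpd2 H (γ₂ t), rpd1 H (γ₂ t)) t)
    (T₁ T₂ : ℝ) (hT₁ : 0 < T₁) (hT₂ : 0 < T₂)
    (d₁₁ d₁₂ d₂₁ d₂₂ : ℤ)
    (hd₁ : ¬(d₁₁ = 0 ∧ d₁₂ = 0)) (hd₂ : ¬(d₂₁ = 0 ∧ d₂₂ = 0))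
    (hper₁ : ∀ t, γ₁ (t + T₁) = γ₁ t + d₁₁ • a₁ + d₁₂ • a₂)
    (hper₂ : ∀ t, γ₂ (t + T₂) = γ₂ t + d₂₁ • a₁ + d₂₂ • a₂) :
    d₁₁ * d₂₂ - d₁₂ * d₂₁ = 0 := by
  by_contra hdet
  -- the drift vectors
  set v₁ : ℝ × ℝ := d₁₁ • a₁ + d₁₂ • a₂ with hv₁
  set v₂ : ℝ × ℝ := d₂₁ • a₁ + d₂₂ • a₂ with hv₂
  have hP1 : ∀ t, γ₁ (t + T₁) = γ₁ t + v₁ := by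
    intro t; rw [hper₁ t, hv₁, add_assoc]
  have hP2 : ∀ t, γ₂ (t + T₂) = γ₂ t + v₂ := by
    intro t; rw [hper₂ t, hv₂, add_assoc]
  -- linear independence of the drift vectors
  have hA : ∀ s t : ℝ, s • a₁ + t • a₂ = 0 → s = 0 ∧ t = 0 :=
    fun s t h => LinearIndependent.pair_iff.mp hindep s t h
  have hdetR : (d₁₁ * d₂₂ - d₁₂ * d₂₁ : ℝ) ≠ 0 := by
    intro h; apply hdet; exact_mod_cast h
  have hvind : ∀ s t : ℝ, s • v₁ + t • v₂ = 0 → s = 0 ∧ t = 0 := by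
    intro s t hst
    have hexp : (s * d₁₁ + t * d₂₁) • a₁ + (s * d₁₂ + t * d₂₂) • a₂ = 0 := by
      rw [← hst, hv₁, hv₂]
      simp only [← Int.cast_smul_eq_zsmul ℝ]
      simp only [smul_add, smul_smul, add_smul]
      abel
    obtain ⟨h1, h2⟩ := hA _ _ hexp
    have hs : s * (d₁₁ * d₂₂ - d₁₂ * d₂₁ : ℝ) = 0 := by linear_combination (d₂₂:ℝ) * h1 - (d₂₁:ℝ) * h2
    have ht : t * (d₁₁ * d₂₂ - d₁₂ * d₂₁ : ℝ) = 0 := by linear_combination (d₁₁:ℝ) * h2 - (d₁₂:ℝ) * h1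
    exact ⟨by rcases mul_eq_zero.mp hs with h | h; exact h; exact absurd h hdetR,
           by rcases mul_eq_zero.mp ht with h | h; exact h; exact absurd h hdetR⟩
  -- the vector field
  set V : ℝ × ℝ → ℝ × ℝ := fun y => (-rpd2 H y, rpd1 H y) with hV
  have hVsm : ContDiff ℝ (⊤:ℕ∞) V := Stmt13Aux.V_contDiff hH
  have hVc : Continuous V := hVsm.continuous
  have hγ₁c : Continuous γ₁ := continuous_iff_continuousAt.mpr fun t => (hγ₁ t).continuousAt
  have hγ₂c : Continuous γ₂ := continuous_iff_continuousAt.mpr fun t => (hγ₂ t).continuousAt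
  have hVper : ∀ (y : ℝ × ℝ) (l₁ l₂ : ℤ), V (y + l₁ • a₁ + l₂ • a₂) = V y := by
    intro y l₁ l₂
    have hfd : fderiv ℝ H (y + l₁ • a₁ + l₂ • a₂) = fderiv ℝ H y := by
      rw [add_assoc]
      exact Stmt13Aux.fderiv_translate (hH.differentiable (by simp)) _
        (fun z => by rw [← add_assoc]; exact hper z l₁ l₂) y
    rw [hV]
    simp only
    rw [Stmt13Aux.rpd1_eq hH, Stmt13Aux.rpd2_eq hH, Stmt13Aux.rpd1_eq hH,
      Stmt13Aux.rpd2_eq hH, hfd]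
  obtain ⟨K, hK⟩ := Stmt13Aux.lipschitz_of_periodic hVsm hindep hVper
  -- complex set-up
  set J : (ℝ × ℝ) ≃L[ℝ] ℂ := Complex.equivRealProdCLM.symm with hJ
  set w₁ : ℂ := J v₁ with hw₁
  set w₂ : ℂ := J v₂ with hw₂
  have hwind : LinearIndependent ℝ ![w₁, w₂] := by
    rw [LinearIndependent.pair_iff]
    intro s t hst
    apply hvind s t
    have h0 : J (s • v₁ + t • v₂) = 0 := by
      rw [map_add, map_smul, map_smul, ← hw₁, ← hw₂]; exact hst
    rwa [ContinuousLinearEquiv.map_eq_zero_iff] at h0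
  have hcard2 : Fintype.card (Fin 2) = Module.finrank ℝ ℂ := by
    simp [Complex.finrank_real_complex]
  set bw := basisOfLinearIndependentOfCardEqFinrank hwind hcard2 with hbw
  have hbw0 : bw 0 = w₁ := by
    rw [hbw, coe_basisOfLinearIndependentOfCardEqFinrank]; rfl
  have hbw1 : bw 1 = w₂ := by
    rw [hbw, coe_basisOfLinearIndependentOfCardEqFinrank]; rfl
  set Mc : ℂ ≃L[ℝ] ℂ := (bw.equiv Complex.basisOneI (Equiv.refl _)).toContinuousLinearEquiv
    with hMc
  have hMc1 : Mc w₁ = 1 := by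
    rw [hMc]
    show (bw.equiv Complex.basisOneI (Equiv.refl _)) w₁ = 1
    rw [← hbw0, Module.Basis.equiv_apply]
    simp [Complex.coe_basisOneI]
  have hMc2 : Mc w₂ = Complex.I := by
    rw [hMc]
    show (bw.equiv Complex.basisOneI (Equiv.refl _)) w₂ = Complex.I
    rw [← hbw1, Module.Basis.equiv_apply]
    simp [Complex.coe_basisOneI]
  set P : (ℝ × ℝ) →L[ℝ] ℂ := (Mc : ℂ →L[ℝ] ℂ).comp (J : (ℝ × ℝ) →L[ℝ] ℂ) with hP
  have hPapp : ∀ y, P y = Mc (J y) := fun y => rfl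
  have hPv₁ : P v₁ = 1 := by rw [hPapp, ← hw₁, hMc1]
  have hPv₂ : P v₂ = Complex.I := by rw [hPapp, ← hw₂, hMc2]
  have hP0 : ∀ y, P y = 0 → y = 0 := by
    intro y hy
    rw [hPapp] at hy
    rw [ContinuousLinearEquiv.map_eq_zero_iff] at hy
    rwa [ContinuousLinearEquiv.map_eq_zero_iff] at hy
  -- the map Φ
  set sf : ℂ → ℝ := fun z => T₁ * z.re with hsf
  set tf : ℂ → ℝ := fun z => -T₂ * z.im with htf
  set Φ : ℂ → ℂ := fun z => P (γ₁ (sf z) - γ₂ (tf z)) with hΦ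
  set Φd : ℂ → (ℂ →L[ℝ] ℂ) := fun z =>
    P.comp (((T₁ • Complex.reCLM).smulRight (V (γ₁ (sf z)))) -
            (((-T₂) • Complex.imCLM).smulRight (V (γ₂ (tf z))))) with hΦdd
  have hsfd : ∀ z : ℂ, HasFDerivAt sf (T₁ • Complex.reCLM) z := by
    intro z
    have := (Complex.reCLM.hasFDerivAt (x := z)).const_smul T₁
    exact this
  have htfd : ∀ z : ℂ, HasFDerivAt tf ((-T₂) • Complex.imCLM) z := by
    intro z
    have := (Complex.imCLM.hasFDerivAt (x := z)).const_smul (-T₂)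
    exact this
  have hΦderiv : ∀ z, HasFDerivAt Φ (Φd z) z := by
    intro z
    have h1 : HasFDerivAt (fun z : ℂ => γ₁ (sf z))
        ((T₁ • Complex.reCLM).smulRight (V (γ₁ (sf z)))) z :=
      Stmt13Aux.comp_scalar (hγ₁ (sf z)) (hsfd z)
    have h2 : HasFDerivAt (fun z : ℂ => γ₂ (tf z))
        (((-T₂) • Complex.imCLM).smulRight (V (γ₂ (tf z)))) z :=
      Stmt13Aux.comp_scalar (hγ₂ (tf z)) (htfd z)
    exact (P.hasFDerivAt.comp z (h1.sub h2) : _)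
  have hΦdc : Continuous (fun p : ℂ × ℂ => Φd p.1 p.2) := by
    have heq : (fun p : ℂ × ℂ => Φd p.1 p.2) = fun p : ℂ × ℂ =>
        P ((T₁ * p.2.re) • (V (γ₁ (sf p.1))) - ((-T₂) * p.2.im) • (V (γ₂ (tf p.1)))) := by
      funext p
      rw [hΦdd]
      simp [ContinuousLinearMap.smulRight_apply, ContinuousLinearMap.smul_apply,
        smul_eq_mul]
    rw [heq]
    apply P.continuous.comp
    apply Continuous.sub
    · exact (continuous_const.mul (Complex.continuous_re.comp continuous_snd)).smul
        ((hVc.comp (hγ₁c.comp (continuous_const.mul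
          (Complex.continuous_re.comp continuous_fst)))))
    · exact (continuous_const.mul (Complex.continuous_im.comp continuous_snd)).smul
        ((hVc.comp (hγ₂c.comp (continuous_const.mul
          (Complex.continuous_im.comp continuous_fst)))))
  -- Φ - id is bounded
  have hred : ∀ z : ℂ, Φ z - z =
      Φ (((Int.fract z.re : ℝ) : ℂ) + ((Int.fract z.im : ℝ) : ℂ) * Complex.I) -
        (((Int.fract z.re : ℝ) : ℂ) + ((Int.fract z.im : ℝ) : ℂ) * Complex.I) := by
    intro z
    set ζ : ℂ := ((Int.fract z.re : ℝ) : ℂ) + ((Int.fract z.im : ℝ) : ℂ) * Complex.I with hζ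
    have hζre : ζ.re = Int.fract z.re := by simp [hζ]
    have hζim : ζ.im = Int.fract z.im := by simp [hζ]
    have hs1 : sf z = sf ζ + ⌊z.re⌋ • T₁ := by
      rw [hsf]; simp only [hζre]
      rw [zsmul_eq_mul, Int.fract]
      ring
    have ht1 : tf z = tf ζ + (-⌊z.im⌋) • T₂ := by
      rw [htf]; simp only [hζim]
      rw [zsmul_eq_mul, Int.fract]
      push_cast
      ring
    have h1 : γ₁ (sf z) = γ₁ (sf ζ) + ⌊z.re⌋ • v₁ := by
      rw [hs1]; exact Stmt13Aux.quasi_iter γ₁ T₁ v₁ hP1 ⌊z.re⌋ (sf ζ)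
    have h2 : γ₂ (tf z) = γ₂ (tf ζ) + (-⌊z.im⌋) • v₂ := by
      rw [ht1]; exact Stmt13Aux.quasi_iter γ₂ T₂ v₂ hP2 (-⌊z.im⌋) (tf ζ)
    have hΦz : Φ z = Φ ζ + (⌊z.re⌋ : ℂ) + (⌊z.im⌋ : ℂ) * Complex.I := by
      rw [hΦ]
      simp only
      rw [h1, h2]
      have : γ₁ (sf ζ) + ⌊z.re⌋ • v₁ - (γ₂ (tf ζ) + (-⌊z.im⌋) • v₂) =
          (γ₁ (sf ζ) - γ₂ (tf ζ)) + (⌊z.re⌋ • v₁ + ⌊z.im⌋ • v₂) := by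
        simp [neg_zsmul]; abel
      rw [this, map_add, map_add, map_zsmul, map_zsmul, hPv₁, hPv₂]
      push_cast [zsmul_eq_mul]
      ring
    rw [hΦz]
    have hzeq : z = ζ + ((⌊z.re⌋ : ℂ) + (⌊z.im⌋ : ℂ) * Complex.I) := by
      apply Complex.ext <;> simp [hζ, Int.fract_add_floor]
    linear_combination -hzeq
  have hbounded : ∃ C, ∀ z, ‖Φ z - z‖ ≤ C := by
    set Kc : Set ℂ := (fun p : ℝ × ℝ => (p.1 : ℂ) + (p.2 : ℂ) * Complex.I) ''
      (Set.Icc 0 1 ×ˢ Set.Icc 0 1) with hKc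
    have hKcomp : IsCompact Kc := (isCompact_Icc.prod isCompact_Icc).image (by fun_prop)
    have hΦcont : Continuous Φ := by
      rw [continuous_iff_continuousAt]; exact fun z => (hΦderiv z).continuousAt
    have hgcont : Continuous (fun z : ℂ => Φ z - z) := hΦcont.sub continuous_id
    obtain ⟨C, hC⟩ := hKcomp.exists_bound_of_continuousOn hgcont.continuousOn
    refine ⟨C, fun z => ?_⟩
    rw [hred z]
    apply hC
    refine ⟨(Int.fract z.re, Int.fract z.im), ?_, rfl⟩
    exact ⟨⟨Int.fract_nonneg _, (Int.fract_lt_one _).le⟩,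
      ⟨Int.fract_nonneg _, (Int.fract_lt_one _).le⟩⟩
  obtain ⟨C, hC⟩ := hbounded
  obtain ⟨z₀, hz₀⟩ := Stmt13Aux.exists_zero hΦderiv hΦdc hC
  have hmeet : γ₁ (sf z₀) = γ₂ (tf z₀) := by
    have h0 : γ₁ (sf z₀) - γ₂ (tf z₀) = 0 := hP0 _ hz₀
    exact sub_eq_zero.mp h0
  -- uniqueness of solutions : γ₁ is a time translate of γ₂
  set δ : ℝ → ℝ × ℝ := fun t => γ₂ (t - sf z₀ + tf z₀) with hδ
  have hδd : ∀ t, HasDerivAt δ (V (δ t)) t := by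
    intro t
    have hi : HasDerivAt (fun t : ℝ => t - sf z₀ + tf z₀) 1 t :=
      ((hasDerivAt_id t).sub_const _).add_const _
    have h := (hγ₂ (t - sf z₀ + tf z₀)).scomp t hi
    rw [one_smul] at h; exact h
  have hγδ : γ₁ = δ := by
    apply Stmt13Aux.ode_unique hK hγ₁ hδd (t₀ := sf z₀)
    rw [hδ]
    show γ₁ (sf z₀) = γ₂ (sf z₀ - sf z₀ + tf z₀)
    rw [sub_self, zero_add]
    exact hmeet
  have hP2' : ∀ t, γ₁ (t + T₂) = γ₁ t + v₂ := by
    intro t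
    rw [hγδ, hδ]
    simp only
    rw [show t + T₂ - sf z₀ + tf z₀ = (t - sf z₀ + tf z₀) + T₂ by ring, hP2]
  -- the group of quasi-periods
  have hQ : ∀ (n m : ℤ) (t : ℝ), γ₁ (t + (n • T₁ + m • T₂)) = γ₁ t + n • v₁ + m • v₂ := by
    intro n m t
    rw [← add_assoc]
    rw [Stmt13Aux.quasi_iter γ₁ T₂ v₂ hP2' m (t + n • T₁),
      Stmt13Aux.quasi_iter γ₁ T₁ v₁ hP1 n t]
  have hzero : ∀ n m : ℤ, n • v₁ + m • v₂ = 0 → n = 0 ∧ m = 0 := by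
    intro n m h
    have h' : (n : ℝ) • v₁ + (m : ℝ) • v₂ = 0 := by
      rw [Int.cast_smul_eq_zsmul ℝ, Int.cast_smul_eq_zsmul ℝ]; exact h
    obtain ⟨h1, h2⟩ := hvind _ _ h'
    exact ⟨by exact_mod_cast h1, by exact_mod_cast h2⟩
  have hkey : ∀ n m : ℤ, n • T₁ + m • T₂ = 0 → n = 0 ∧ m = 0 := by
    intro n m h
    apply hzero
    have hq := hQ n m 0
    rw [h, add_zero, add_assoc] at hq
    exact left_eq_add.mp hq
  -- every element of the subgroup generated by the two periods
  have hrep : ∀ x ∈ AddSubgroup.closure ({T₁, T₂} : Set ℝ), ∃ n m : ℤ, x = n • T₁ + m • T₂ := by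
    intro x hx
    rw [show ({T₁, T₂} : Set ℝ) = {T₁} ∪ {T₂} by rfl, AddSubgroup.closure_union] at hx
    obtain ⟨y, hy, z, hz, hyz⟩ := AddSubgroup.mem_sup.mp hx
    obtain ⟨n, hn⟩ := AddSubgroup.mem_closure_singleton.mp hy
    obtain ⟨m, hm⟩ := AddSubgroup.mem_closure_singleton.mp hz
    exact ⟨n, m, by rw [← hyz, ← hn, ← hm]⟩
  rcases (AddSubgroup.closure ({T₁, T₂} : Set ℝ)).dense_or_cyclic with hdense | ⟨a, ha⟩
  · -- dense case : arbitrarily small positive quasi-periods, contradiction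
    have hPn : (0:ℝ) ≤ ‖P‖ := norm_nonneg _
    have hεpos : 0 < 1 / (‖P‖ + 1) := by positivity
    obtain ⟨dd, hddpos, hdd⟩ := Metric.continuousAt_iff.mp (hγ₁c.continuousAt (x := 0)) _ hεpos
    obtain ⟨τ, hτS, hτmem⟩ := hdense.exists_mem_open isOpen_Ioo
      (Set.nonempty_Ioo.mpr (by linarith : (0:ℝ) < dd))
    obtain ⟨n, m, hnm⟩ := hrep τ hτS
    have hτpos : (0:ℝ) < τ := hτmem.1
    have hτdd : τ < dd := hτmem.2
    have hnm0 : ¬(n = 0 ∧ m = 0) := by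
      rintro ⟨rfl, rfl⟩
      simp at hnm
      exact (ne_of_gt hτpos) hnm
    have hdist : dist (γ₁ τ) (γ₁ 0) < 1/(‖P‖+1) := by
      apply hdd
      rw [Real.dist_eq, sub_zero, abs_of_pos hτpos]
      exact hτdd
    have hval : γ₁ τ - γ₁ 0 = n • v₁ + m • v₂ := by
      have hq := hQ n m 0
      rw [zero_add, ← hnm, add_assoc] at hq
      rw [hq]
      abel
    have himg : P (γ₁ τ - γ₁ 0) = (n : ℂ) + (m : ℂ) * Complex.I := by
      rw [hval, map_add, map_zsmul, map_zsmul, hPv₁, hPv₂]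
      rw [zsmul_eq_mul, zsmul_eq_mul]
      push_cast
      ring
    have hge : (1:ℝ) ≤ ‖P (γ₁ τ - γ₁ 0)‖ := by
      rw [himg]
      rcases not_and_or.mp hnm0 with h | h
      · have h1 : (1:ℝ) ≤ |(n:ℝ)| := by
          have := Int.one_le_abs h
          exact_mod_cast this
        calc (1:ℝ) ≤ |(n:ℝ)| := h1
          _ = |((n:ℂ) + (m:ℂ)*Complex.I).re| := by simp
          _ ≤ ‖(n:ℂ) + (m:ℂ)*Complex.I‖ := Complex.abs_re_le_norm _
      · have h1 : (1:ℝ) ≤ |(m:ℝ)| := by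
          have := Int.one_le_abs h
          exact_mod_cast this
        calc (1:ℝ) ≤ |(m:ℝ)| := h1
          _ = |((n:ℂ) + (m:ℂ)*Complex.I).im| := by simp
          _ ≤ ‖(n:ℂ) + (m:ℂ)*Complex.I‖ := Complex.abs_im_le_norm _
    have hle : ‖P (γ₁ τ - γ₁ 0)‖ ≤ ‖P‖ * ‖γ₁ τ - γ₁ 0‖ := P.le_opNorm _
    have hnn : ‖γ₁ τ - γ₁ 0‖ < 1/(‖P‖+1) := by rwa [dist_eq_norm] at hdist
    have hnn0 : (0:ℝ) ≤ ‖γ₁ τ - γ₁ 0‖ := norm_nonneg _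
    have hchain : ‖P‖ * ‖γ₁ τ - γ₁ 0‖ ≤ ‖P‖ * (1/(‖P‖+1)) :=
      mul_le_mul_of_nonneg_left hnn.le hPn
    have hlt1 : ‖P‖ * (1/(‖P‖+1)) < 1 := by
      rw [mul_one_div]
      rw [div_lt_one (by positivity)]
      linarith
    linarith
  · -- cyclic case
    have hT1m : T₁ ∈ AddSubgroup.closure ({T₁, T₂} : Set ℝ) :=
      AddSubgroup.subset_closure (by simp)
    have hT2m : T₂ ∈ AddSubgroup.closure ({T₁, T₂} : Set ℝ) :=
      AddSubgroup.subset_closure (by simp)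
    rw [ha] at hT1m hT2m
    obtain ⟨k, hk⟩ := AddSubgroup.mem_closure_singleton.mp hT1m
    obtain ⟨l, hl⟩ := AddSubgroup.mem_closure_singleton.mp hT2m
    have hl0 : l ≠ 0 := by
      rintro rfl
      rw [zero_smul] at hl
      linarith
    have hcomb : l • T₁ + (-k) • T₂ = 0 := by
      rw [← hk, ← hl, smul_smul, smul_smul]
      rw [← add_smul]
      have : l * k + -k * l = 0 := by ring
      rw [this, zero_smul]
    exact hl0 (hkey l (-k) hcomb).1
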